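/- For every element h of the first-level stabilizer H of the Grigorchuk group, writing ψ(h) = (h₀, h₁), the identity h = a·σ(h₀)·a·σ(τ(h₀)⁻¹·h₁) holds in G, where σ and τ are the homomorphisms with σ(a)=aca, σ(b)=d, σ(c)=b, σ(d)=c and τ(a)=d, τ(b)=1, τ(c)=a, τ(d)=a. -/

import Mathlib

/-- The generator `a` of the Grigorchuk group, acting on finite binary sequences. -/
def grigA : List Bool → List Bool
  | [] => []
  | x :: σ => (!x) :: σ

mutual
  /-- The generator `b` of the Grigorchuk group. -/
  def grigB : List Bool → List Bool
    | [] => []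
    | false :: σ => false :: grigA σ
    | true :: σ => true :: grigC σ
  /-- The generator `c` of the Grigorchuk group. -/
  def grigC : List Bool → List Bool
    | [] => []
    | false :: σ => false :: grigA σ
    | true :: σ => true :: grigD σ
  /-- The generator `d` of the Grigorchuk group. -/
  def grigD : List Bool → List Bool
    | [] => []
    | false :: σ => false :: σ
    | true :: σ => true :: grigB σ
end

theorem grigA_involutive : Function.Involutive grigA := by
  intro l
  rcases l with _ | ⟨x, σ⟩
  · rfl
  · cases x <;> rfl

theorem grigBCD_involutive :
    ∀ l : List Bool, grigB (grigB l) = l ∧ grigC (grigC l) = l ∧ grigD (grigD l) = l := by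
  intro l
  induction l with
  | nil => exact ⟨rfl, rfl, rfl⟩
  | cons x σ ih =>
      cases x <;>
        simp [grigB, grigC, grigD, grigA_involutive σ, ih.1, ih.2.1, ih.2.2]

theorem grigB_involutive : Function.Involutive grigB := fun l => (grigBCD_involutive l).1
theorem grigC_involutive : Function.Involutive grigC := fun l => (grigBCD_involutive l).2.1
theorem grigD_involutive : Function.Involutive grigD := fun l => (grigBCD_involutive l).2.2

/-- The generator `a` as a permutation of binary sequences. -/
def aP : Equiv.Perm (List Bool) := grigA_involutive.toPerm
/-- The generator `b` as a permutation of binary sequences. -/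
def bP : Equiv.Perm (List Bool) := grigB_involutive.toPerm
/-- The generator `c` as a permutation of binary sequences. -/
def cP : Equiv.Perm (List Bool) := grigC_involutive.toPerm
/-- The generator `d` as a permutation of binary sequences. -/
def dP : Equiv.Perm (List Bool) := grigD_involutive.toPerm

/-- The Grigorchuk group, as the group of permutations of finite binary sequences
generated by `a`, `b`, `c`, `d`. -/
def Grig : Subgroup (Equiv.Perm (List Bool)) := Subgroup.closure {aP, bP, cP, dP}

/-- `a` as an element of the Grigorchuk group. -/
def ga : Grig := ⟨aP, Subgroup.subset_closure (by simp)⟩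
/-- `b` as an element of the Grigorchuk group. -/
def gb : Grig := ⟨bP, Subgroup.subset_closure (by simp)⟩
/-- `c` as an element of the Grigorchuk group. -/
def gc : Grig := ⟨cP, Subgroup.subset_closure (by simp)⟩
/-- `d` as an element of the Grigorchuk group. -/
def gd : Grig := ⟨dP, Subgroup.subset_closure (by simp)⟩

/-- A permutation of binary sequences preserves the first letter. -/
def FixesFirst (g : Equiv.Perm (List Bool)) : Prop :=
  ∀ (x : Bool) (σ : List Bool), ∃ σ' : List Bool, g (x :: σ) = x :: σ'

/-- The defining property of the subtree-decomposition map `ψ : H → G × G`: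
`h(0σ) = 0·h₀(σ)` and `h(1σ) = 1·h₁(σ)` where `ψ(h) = (h₀, h₁)`. -/
def PsiProp (H : Subgroup Grig) (ψ : H →* Grig × Grig) : Prop :=
  ∀ (h : H) (σ : List Bool),
    ((h : Grig) : Equiv.Perm (List Bool)) (false :: σ) =
        false :: (((ψ h).1 : Grig) : Equiv.Perm (List Bool)) σ ∧
    ((h : Grig) : Equiv.Perm (List Bool)) (true :: σ) =
        true :: (((ψ h).2 : Grig) : Equiv.Perm (List Bool)) σ


/-! ### Auxiliary development -/

set_option maxRecDepth 100000

abbrev Quad := List Bool × List Bool × List Bool × List Bool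
abbrev D8 := Bool × Bool × Bool

def mulp : D8 → D8 → D8
  | (m, i, j), (m', i', j') => (xor m m', xor (cond m' j i) i', xor (cond m' i j) j')

def invp : D8 → D8
  | (m, i, j) => (m, cond m j i, cond m i j)

def gAct (g : Equiv.Perm (List Bool)) (q : Quad) : Quad :=
  (g q.1, g q.2.1, g q.2.2.1, g q.2.2.2)
def tbl : List (Quad × D8) := [
  (([false, false, false], [false, true, false], [true, false, false], [true, true, false]), (false, false, false)),
  (([true, false, false], [true, true, false], [false, false, false], [false, true, false]), (false, false, true)),
  (([false, true, false], [false, false, false], [true, false, true], [true, true, false]), (false, false, false)),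
  (([false, true, false], [false, false, false], [true, false, false], [true, true, false]), (true, false, false)),
  (([false, false, false], [false, true, false], [true, false, true], [true, true, false]), (true, false, false)),
  (([true, false, true], [true, true, false], [false, true, false], [false, false, false]), (false, false, true)),
  (([true, false, false], [true, true, false], [false, true, false], [false, false, false]), (true, false, true)),
  (([true, false, true], [true, true, false], [false, false, false], [false, true, false]), (true, false, true)),
  (([true, true, false], [true, false, false], [false, false, true], [false, true, false]), (false, false, true)),
  (([true, true, false], [true, false, false], [false, false, false], [false, true, false]), (true, true, false)),
  (([true, false, false], [true, true, false], [false, false, true], [false, true, false]), (true, true, false)),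
  (([false, false, true], [false, true, false], [true, true, false], [true, false, false]), (false, false, false)),
  (([false, false, false], [false, true, false], [true, true, false], [true, false, false]), (true, true, true)),
  (([false, false, true], [false, true, false], [true, false, false], [true, true, false]), (true, true, true)),
  (([true, true, false], [true, false, true], [false, true, true], [false, false, false]), (false, false, true)),
  (([true, true, false], [true, false, false], [false, true, true], [false, false, false]), (true, false, true)),
  (([true, true, false], [true, false, true], [false, false, true], [false, true, false]), (true, false, true)),
  (([true, true, false], [true, false, true], [false, true, false], [false, false, false]), (true, true, false)),
  (([true, true, false], [true, false, false], [false, true, false], [false, false, false]), (false, true, false)),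
  (([true, true, false], [true, false, true], [false, false, false], [false, true, false]), (false, true, false)),
  (([true, false, true], [true, true, false], [false, true, true], [false, false, false]), (true, true, false)),
  (([true, false, false], [true, true, false], [false, true, true], [false, false, false]), (false, true, false)),
  (([true, false, true], [true, true, false], [false, false, true], [false, true, false]), (false, true, false)),
  (([false, true, true], [false, false, false], [true, true, false], [true, false, true]), (false, false, false)),
  (([false, true, true], [false, false, false], [true, true, false], [true, false, false]), (true, false, false)),
  (([false, false, true], [false, true, false], [true, true, false], [true, false, true]), (true, false, false)),
  (([false, true, false], [false, false, false], [true, true, false], [true, false, true]), (true, true, true)),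
  (([false, true, false], [false, false, false], [true, true, false], [true, false, false]), (false, true, true)),
  (([false, false, false], [false, true, false], [true, true, false], [true, false, true]), (false, true, true)),
  (([false, true, true], [false, false, false], [true, false, true], [true, true, false]), (true, true, true)),
  (([false, true, true], [false, false, false], [true, false, false], [true, true, false]), (false, true, true)),
  (([false, false, true], [false, true, false], [true, false, true], [true, true, false]), (false, true, true)),
  (([false, true, false], [false, false, true], [true, true, true], [true, false, false]), (false, false, false)),
  (([false, true, false], [false, false, false], [true, true, true], [true, false, false]), (true, true, true)),
  (([false, true, false], [false, false, true], [true, false, true], [true, true, false]), (true, true, true)),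
  (([false, true, false], [false, false, true], [true, true, false], [true, false, false]), (true, false, false)),
  (([false, true, false], [false, false, true], [true, false, false], [true, true, false]), (false, true, true)),
  (([false, false, true], [false, true, false], [true, true, true], [true, false, false]), (true, false, false)),
  (([false, false, false], [false, true, false], [true, true, true], [true, false, false]), (false, true, true)),
  (([true, true, true], [true, false, false], [false, true, false], [false, false, true]), (false, false, true)),
  (([true, true, true], [true, false, false], [false, true, false], [false, false, false]), (true, true, false)),
  (([true, false, true], [true, true, false], [false, true, false], [false, false, true]), (true, true, false)),
  (([true, true, false], [true, false, false], [false, true, false], [false, false, true]), (true, false, true)),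
  (([true, false, false], [true, true, false], [false, true, false], [false, false, true]), (false, true, false)),
  (([true, true, true], [true, false, false], [false, false, true], [false, true, false]), (true, false, true)),
  (([true, true, true], [true, false, false], [false, false, false], [false, true, false]), (false, true, false)),
  (([false, false, false], [false, true, true], [true, true, true], [true, false, true]), (false, false, false)),
  (([false, false, false], [false, true, true], [true, true, true], [true, false, false]), (true, false, false)),
  (([false, true, false], [false, false, true], [true, true, true], [true, false, true]), (true, false, false)),
  (([false, false, false], [false, true, false], [true, true, true], [true, false, true]), (true, true, true)),
  (([false, true, false], [false, false, false], [true, true, true], [true, false, true]), (false, true, true)),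
  (([false, false, false], [false, true, true], [true, false, false], [true, true, false]), (true, true, true)),
  (([false, false, false], [false, true, true], [true, false, true], [true, true, false]), (false, true, true)),
  (([false, false, false], [false, true, true], [true, true, false], [true, false, true]), (true, false, false)),
  (([false, false, false], [false, true, true], [true, true, false], [true, false, false]), (false, false, false)),
  (([false, true, false], [false, false, true], [true, true, false], [true, false, true]), (false, false, false)),
  (([false, true, true], [false, false, false], [true, true, true], [true, false, true]), (true, false, false)),
  (([false, true, true], [false, false, false], [true, true, true], [true, false, false]), (false, false, false)),
  (([false, false, true], [false, true, false], [true, true, true], [true, false, true]), (false, false, false)),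
  (([true, true, true], [true, false, true], [false, false, false], [false, true, true]), (false, false, true)),
  (([true, true, true], [true, false, false], [false, false, false], [false, true, true]), (true, false, true)),
  (([true, true, true], [true, false, true], [false, true, false], [false, false, true]), (true, false, true)),
  (([true, true, true], [true, false, true], [false, false, false], [false, true, false]), (true, true, false)),
  (([true, true, true], [true, false, true], [false, true, false], [false, false, false]), (false, true, false)),
  (([true, false, false], [true, true, false], [false, false, false], [false, true, true]), (true, true, false)),
  (([true, false, true], [true, true, false], [false, false, false], [false, true, true]), (false, true, false)),
  (([true, true, false], [true, false, true], [false, false, false], [false, true, true]), (true, false, true)),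
  (([true, true, false], [true, false, false], [false, false, false], [false, true, true]), (false, false, true)),
  (([true, true, false], [true, false, true], [false, true, false], [false, false, true]), (false, false, true)),
  (([true, true, true], [true, false, true], [false, true, true], [false, false, false]), (true, false, true)),
  (([true, true, true], [true, false, false], [false, true, true], [false, false, false]), (false, false, true)),
  (([true, true, true], [true, false, true], [false, false, true], [false, true, false]), (false, false, true)),
  (([true, false, false], [true, true, true], [false, true, true], [false, false, true]), (false, false, true)),
  (([true, false, false], [true, true, true], [false, true, true], [false, false, false]), (true, true, false)),
  (([true, true, false], [true, false, true], [false, true, true], [false, false, true]), (true, true, false)),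
  (([true, false, false], [true, true, false], [false, true, true], [false, false, true]), (true, false, true)),
  (([true, true, false], [true, false, false], [false, true, true], [false, false, true]), (false, true, false)),
  (([true, false, false], [true, true, true], [false, false, false], [false, true, false]), (true, false, true)),
  (([true, false, false], [true, true, true], [false, false, true], [false, true, false]), (false, true, false)),
  (([true, false, false], [true, true, true], [false, true, false], [false, false, true]), (true, true, false)),
  (([true, false, false], [true, true, true], [false, true, false], [false, false, false]), (false, false, true)),
  (([true, true, true], [true, false, false], [false, true, true], [false, false, true]), (true, true, false)),
  (([true, false, true], [true, true, false], [false, true, true], [false, false, true]), (false, false, true)),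
  (([false, true, true], [false, false, true], [true, false, false], [true, true, true]), (false, false, false)),
  (([false, true, true], [false, false, false], [true, false, false], [true, true, true]), (true, true, true)),
  (([false, true, true], [false, false, true], [true, true, false], [true, false, true]), (true, true, true)),
  (([false, true, true], [false, false, true], [true, false, false], [true, true, false]), (true, false, false)),
  (([false, true, true], [false, false, true], [true, true, false], [true, false, false]), (false, true, true)),
  (([false, false, false], [false, true, false], [true, false, false], [true, true, true]), (true, false, false)),
  (([false, false, true], [false, true, false], [true, false, false], [true, true, true]), (false, true, true)),
  (([false, true, false], [false, false, true], [true, false, false], [true, true, true]), (true, true, true)),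
  (([false, true, false], [false, false, false], [true, false, false], [true, true, true]), (false, false, false)),
  (([false, true, true], [false, false, true], [true, true, true], [true, false, false]), (true, true, true)),
  (([false, true, true], [false, false, true], [true, false, true], [true, true, false]), (false, false, false)),
  (([true, false, true], [true, true, true], [false, false, true], [false, true, true]), (false, false, true)),
  (([true, false, false], [true, true, true], [false, false, true], [false, true, true]), (true, false, true)),
  (([true, false, true], [true, true, true], [false, true, true], [false, false, true]), (true, false, true)),
  (([true, false, true], [true, true, true], [false, false, true], [false, true, false]), (true, true, false)),
  (([true, false, true], [true, true, true], [false, true, true], [false, false, false]), (false, true, false)),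
  (([true, true, false], [true, false, false], [false, false, true], [false, true, true]), (true, true, false)),
  (([true, true, false], [true, false, true], [false, false, true], [false, true, true]), (false, true, false)),
  (([true, false, true], [true, true, false], [false, false, true], [false, true, true]), (true, false, true)),
  (([true, false, false], [true, true, false], [false, false, true], [false, true, true]), (false, false, true)),
  (([true, false, true], [true, true, true], [false, true, false], [false, false, false]), (true, false, true)),
  (([true, false, true], [true, true, true], [false, false, false], [false, true, false]), (false, false, true)),
  (([true, false, true], [true, true, true], [false, false, false], [false, true, true]), (true, true, false)),
  (([true, false, false], [true, true, true], [false, false, false], [false, true, true]), (false, true, false)),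
  (([true, false, true], [true, true, true], [false, true, false], [false, false, true]), (false, true, false)),
  (([true, true, true], [true, false, true], [false, false, true], [false, true, true]), (true, true, false)),
  (([true, true, true], [true, false, false], [false, false, true], [false, true, true]), (false, true, false)),
  (([true, true, true], [true, false, true], [false, true, true], [false, false, true]), (false, true, false)),
  (([false, false, true], [false, true, true], [true, false, true], [true, true, true]), (false, false, false)),
  (([false, false, true], [false, true, true], [true, false, false], [true, true, true]), (true, false, false)),
  (([false, true, true], [false, false, true], [true, false, true], [true, true, true]), (true, false, false)),
  (([false, false, true], [false, true, false], [true, false, true], [true, true, true]), (true, true, true)),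
  (([false, true, true], [false, false, false], [true, false, true], [true, true, true]), (false, true, true)),
  (([false, false, true], [false, true, true], [true, true, false], [true, false, false]), (true, true, true)),
  (([false, false, true], [false, true, true], [true, true, false], [true, false, true]), (false, true, true)),
  (([false, false, true], [false, true, true], [true, false, true], [true, true, false]), (true, false, false)),
  (([false, false, true], [false, true, true], [true, false, false], [true, true, false]), (false, false, false)),
  (([false, true, false], [false, false, false], [true, false, true], [true, true, true]), (true, false, false)),
  (([false, false, false], [false, true, false], [true, false, true], [true, true, true]), (false, false, false)),
  (([false, false, false], [false, true, true], [true, false, true], [true, true, true]), (true, true, true)),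
  (([false, false, false], [false, true, true], [true, false, false], [true, true, true]), (false, true, true)),
  (([false, true, false], [false, false, true], [true, false, true], [true, true, true]), (false, true, true)),
  (([false, false, true], [false, true, true], [true, true, true], [true, false, true]), (true, true, true)),
  (([false, false, true], [false, true, true], [true, true, true], [true, false, false]), (false, true, true)),
  (([false, true, true], [false, false, true], [true, true, true], [true, false, true]), (false, true, true))]

def GRel (g : Equiv.Perm (List Bool)) (p : D8) : Prop :=
  ∀ e ∈ tbl, (gAct g e.1, mulp p e.2) ∈ tbl

instance grelDec (g : Equiv.Perm (List Bool)) (p : D8) : Decidable (GRel g p) :=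
  inferInstanceAs (Decidable (∀ e ∈ tbl, (gAct g e.1, mulp p e.2) ∈ tbl))

lemma mulp_assoc : ∀ p q r : D8, mulp (mulp p q) r = mulp p (mulp q r) := by decide
lemma mulp_one : ∀ p : D8, mulp p (false, false, false) = p := by decide
lemma mulp_inv_cancel : ∀ p v : D8, mulp (invp p) (mulp p v) = v := by decide
lemma mulp_left_cancel : ∀ p v w : D8, mulp p v = mulp p w → v = w := by decide

set_option maxRecDepth 100000 in
lemma keysNodup : (tbl.map Prod.fst).Nodup := by decide

lemma tblNodup : tbl.Nodup := List.Nodup.of_map Prod.fst keysNodup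

lemma lookup_unique {α β : Type} (l : List (α × β)) (hl : (l.map Prod.fst).Nodup)
    (k : α) (v v' : β) (hv : (k, v) ∈ l) (hv' : (k, v') ∈ l) : v = v' := by
  induction l with
  | nil => cases hv
  | cons e t ih =>
    rw [List.map_cons, List.nodup_cons] at hl
    rcases List.mem_cons.1 hv with h1 | h1 <;> rcases List.mem_cons.1 hv' with h2 | h2
    · rw [← h1] at h2
      exact (congrArg Prod.snd h2).symm
    · exfalso
      apply hl.1
      rw [← h1]
      exact List.mem_map.2 ⟨(k, v'), h2, rfl⟩
    · exfalso
      apply hl.1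
      rw [← h2]
      exact List.mem_map.2 ⟨(k, v), h1, rfl⟩
    · exact ih hl.2 h1 h2

lemma gAct_mul (g h : Equiv.Perm (List Bool)) (q : Quad) :
    gAct (g * h) q = gAct g (gAct h q) := rfl

lemma rel_mul {g h : Equiv.Perm (List Bool)} {p q : D8} (hg : GRel g p) (hh : GRel h q) :
    GRel (g * h) (mulp p q) := by
  intro e he
  have h2 := hg _ (hh e he)
  rw [gAct_mul, mulp_assoc]
  exact h2

set_option maxRecDepth 100000 in
lemma rel_one : GRel 1 (false, false, false) := by decide

lemma gAct_injective (g : Equiv.Perm (List Bool)) : Function.Injective (gAct g) := by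
  rintro ⟨a1, a2, a3, a4⟩ ⟨b1, b2, b3, b4⟩ h
  simp only [gAct, Prod.mk.injEq] at h
  simp [g.injective h.1, g.injective h.2.1, g.injective h.2.2.1, g.injective h.2.2.2]

lemma rel_inv {g : Equiv.Perm (List Bool)} {p : D8} (hg : GRel g p) : GRel g⁻¹ (invp p) := by
  classical
  set f : Quad × D8 → Quad × D8 := fun e => (gAct g e.1, mulp p e.2) with hf
  have hinj : Function.Injective f := by
    rintro ⟨q1, v1⟩ ⟨q2, v2⟩ h
    simp only [f, Prod.mk.injEq] at h
    exact Prod.ext (gAct_injective g h.1) (mulp_left_cancel p v1 v2 h.2)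
  have hsub : (tbl.map f) ⊆ tbl := by
    intro y hy
    rcases List.mem_map.1 hy with ⟨e, he, rfl⟩
    exact hg e he
  have hnd : (tbl.map f).Nodup := tblNodup.map hinj
  have hset : (tbl.map f).toFinset = tbl.toFinset := by
    apply Finset.eq_of_subset_of_card_le
    · intro x hx
      rw [List.mem_toFinset] at hx ⊢
      exact hsub hx
    · rw [List.toFinset_card_of_nodup hnd, List.toFinset_card_of_nodup tblNodup,
        List.length_map]
  intro e he
  have he2 : e ∈ tbl.map f := by
    rw [← List.mem_toFinset, hset] at *
    rwa [List.mem_toFinset]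
  rcases List.mem_map.1 he2 with ⟨⟨q', v'⟩, he', hfe⟩
  have h1 : gAct g q' = e.1 := congrArg Prod.fst hfe
  have h2 : mulp p v' = e.2 := congrArg Prod.snd hfe
  have hq : gAct g⁻¹ e.1 = q' := by
    rw [← h1, ← gAct_mul, inv_mul_cancel]
    rfl
  have hv : mulp (invp p) e.2 = v' := by rw [← h2, mulp_inv_cancel]
  rw [hq, hv]
  exact he'

set_option maxRecDepth 100000 in
lemma rel_aP : GRel aP (false, false, true) := by decide
set_option maxRecDepth 100000 in
lemma rel_bP : GRel bP (false, false, false) := by decide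
set_option maxRecDepth 100000 in
lemma rel_cP : GRel cP (true, false, false) := by decide
set_option maxRecDepth 100000 in
lemma rel_dP : GRel dP (true, false, false) := by decide

lemma exists_rel (g : Grig) : ∃ p : D8, GRel (g : Equiv.Perm (List Bool)) p := by
  obtain ⟨x, hx⟩ := g
  refine Subgroup.closure_induction ?_ ?_ ?_ ?_ hx
  · intro y hy
    rcases hy with h | h | h | h <;> subst h
    · exact ⟨_, rel_aP⟩
    · exact ⟨_, rel_bP⟩
    · exact ⟨_, rel_cP⟩
    · exact ⟨_, rel_dP⟩
  · exact ⟨_, rel_one⟩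
  · rintro x y _ _ ⟨p, hp⟩ ⟨q, hq⟩
    exact ⟨mulp p q, rel_mul hp hq⟩
  · rintro x _ ⟨p, hp⟩
    exact ⟨invp p, rel_inv hp⟩

lemma rel_unique {g : Equiv.Perm (List Bool)} {p p' : D8}
    (h : GRel g p) (h' : GRel g p') : p = p' := by
  have e0 : ((([false, false, false], [false, true, false], [true, false, false],
      [true, true, false]) : Quad), ((false, false, false) : D8)) ∈ tbl := by decide
  have h1 := h _ e0
  have h2 := h' _ e0
  rw [mulp_one] at h1 h2
  exact lookup_unique tbl keysNodup _ _ _ h1 h2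

noncomputable def bitsOf (g : Grig) : D8 := Classical.choose (exists_rel g)

lemma bits_spec (g : Grig) : GRel (g : Equiv.Perm (List Bool)) (bitsOf g) :=
  Classical.choose_spec (exists_rel g)

lemma bits_mul (g h : Grig) : bitsOf (g * h) = mulp (bitsOf g) (bitsOf h) :=
  rel_unique (bits_spec (g * h)) (rel_mul (bits_spec g) (bits_spec h))

lemma bits_one : bitsOf 1 = (false, false, false) :=
  rel_unique (bits_spec 1) rel_one

lemma bits_ga : bitsOf ga = (false, false, true) := rel_unique (bits_spec ga) rel_aP
lemma bits_gb : bitsOf gb = (false, false, false) := rel_unique (bits_spec gb) rel_bP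
lemma bits_gc : bitsOf gc = (true, false, false) := rel_unique (bits_spec gc) rel_cP
lemma bits_gd : bitsOf gd = (true, false, false) := rel_unique (bits_spec gd) rel_dP

def TG : D8 → Grig
  | (false, false, false) => 1
  | (false, true, false) => ga * gd * ga
  | (false, false, true) => gd
  | (false, true, true) => ga * gd * ga * gd
  | (true, false, false) => ga
  | (true, true, false) => gd * ga
  | (true, false, true) => ga * gd
  | (true, true, true) => ga * gd * ga * gd * ga

def tfun : D8 → List Bool → List Bool
  | _, [] => []
  | (m, i, j), (x :: w) => (xor x m) :: cond (cond x j i) (grigB w) w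

lemma TG_apply : ∀ (p : D8) (l : List Bool),
    ((TG p : Grig) : Equiv.Perm (List Bool)) l = tfun p l := by
  rintro ⟨m, i, j⟩ (_ | ⟨x, w⟩) <;>
    cases m <;> cases i <;> cases j <;> first | rfl | (cases x <;> rfl)

lemma tfun_comp : ∀ (p q : D8) (l : List Bool), tfun p (tfun q l) = tfun (mulp p q) l := by
  rintro ⟨m, i, j⟩ ⟨m', i', j'⟩ (_ | ⟨x, w⟩)
  · rfl
  · cases m <;> cases i <;> cases j <;> cases m' <;> cases i' <;> cases j' <;> cases x <;>
      simp [tfun, mulp, grigB_involutive w]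

lemma TG_mul (p q : D8) : TG (mulp p q) = TG p * TG q := by
  apply Subtype.ext
  apply Equiv.ext
  intro l
  have : ((TG p * TG q : Grig) : Equiv.Perm (List Bool)) l
      = ((TG p : Grig) : Equiv.Perm (List Bool)) (((TG q : Grig) : Equiv.Perm (List Bool)) l) :=
    rfl
  rw [this, TG_apply, TG_apply, TG_apply, tfun_comp]

noncomputable def tauG (g : Grig) : Grig := TG (bitsOf g)

lemma tau_mul (g h : Grig) : tauG (g * h) = tauG g * tauG h := by
  rw [tauG, bits_mul, TG_mul]; rfl

lemma tau_one : tauG 1 = 1 := by rw [tauG, bits_one]; rfl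

lemma tau_inv (g : Grig) : tauG g⁻¹ = (tauG g)⁻¹ := by
  have h : tauG g * tauG g⁻¹ = 1 := by
    rw [← tau_mul, mul_inv_cancel, tau_one]
  exact (inv_eq_of_mul_eq_one_right h).symm

lemma tau_ga : tauG ga = gd := by rw [tauG, bits_ga]; rfl
lemma tau_gb : tauG gb = 1 := by rw [tauG, bits_gb]; rfl
lemma tau_gc : tauG gc = ga := by rw [tauG, bits_gc]; rfl
lemma tau_gd : tauG gd = ga := by rw [tauG, bits_gd]; rfl

lemma tau_cube (g : Grig) : tauG (tauG (tauG g)) = tauG g := by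
  obtain ⟨x, hx⟩ := g
  refine Subgroup.closure_induction
    (p := fun y hy => tauG (tauG (tauG ⟨y, hy⟩)) = tauG ⟨y, hy⟩) ?_ ?_ ?_ ?_ hx
  · intro y hy
    rcases hy with h | h | h | h <;> subst h
    · show tauG (tauG (tauG ga)) = tauG ga
      rw [tau_ga, tau_gd, tau_ga]
    · show tauG (tauG (tauG gb)) = tauG gb
      rw [tau_gb, tau_one, tau_one]
    · show tauG (tauG (tauG gc)) = tauG gc
      rw [tau_gc, tau_ga, tau_gd]
    · show tauG (tauG (tauG gd)) = tauG gd
      rw [tau_gd, tau_ga, tau_gd]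
  · show tauG (tauG (tauG 1)) = tauG 1
    rw [tau_one, tau_one, tau_one]
  · intro x y hx hy px py
    show tauG (tauG (tauG (⟨x, hx⟩ * ⟨y, hy⟩))) = tauG (⟨x, hx⟩ * ⟨y, hy⟩)
    rw [tau_mul, tau_mul, tau_mul, px, py]
  · intro x hx px
    show tauG (tauG (tauG (⟨x, hx⟩)⁻¹)) = tauG (⟨x, hx⟩)⁻¹
    rw [tau_inv, tau_inv, tau_inv, px]

lemma perm_apply_inv_self {α : Type*} (f : Equiv.Perm α) (x : α) : f (f⁻¹ x) = x :=
  f.apply_symm_apply x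

lemma dec (x : Equiv.Perm (List Bool)) (hx : x ∈ Grig) :
    x [] = [] ∧ ∃ (m : Bool) (g₀ g₁ : Grig),
      (∀ (b : Bool) (w : List Bool),
        x (b :: w) = (xor b m) :: ((cond b g₁ g₀ : Grig) : Equiv.Perm (List Bool)) w) ∧
      tauG g₁ = tauG (tauG g₀) := by
  refine Subgroup.closure_induction ?_ ?_ ?_ ?_ hx
  · intro y hy
    rcases hy with h | h | h | h <;> subst h
    · refine ⟨rfl, true, 1, 1, fun b w => ?_, by rw [tau_one, tau_one]⟩
      cases b <;> rfl
    · refine ⟨rfl, false, ga, gc, fun b w => ?_, by rw [tau_gc, tau_ga, tau_gd]⟩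
      cases b <;> rfl
    · refine ⟨rfl, false, ga, gd, fun b w => ?_, by rw [tau_gd, tau_ga, tau_gd]⟩
      cases b <;> rfl
    · refine ⟨rfl, false, 1, gb, fun b w => ?_, by rw [tau_gb, tau_one, tau_one]⟩
      cases b <;> rfl
  · refine ⟨rfl, false, 1, 1, fun b w => ?_, by rw [tau_one, tau_one]⟩
    cases b <;> rfl
  · rintro x y hx hy ⟨hxn, mx, x0, x1, hxw, hxt⟩ ⟨hyn, my, y0, y1, hyw, hyt⟩
    have hmul : ∀ l, (x * y) l = x (y l) := fun l => rfl
    refine ⟨by rw [hmul, hyn, hxn], xor my mx, cond my x1 x0 * y0, cond my x0 x1 * y1,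
      fun b w => ?_, ?_⟩
    · rw [hmul, hyw, hxw]
      cases b <;> cases my <;>
        simp [Bool.xor_false, Bool.xor_true, Subgroup.coe_mul, Equiv.Perm.mul_apply]
    · cases my
      · simp only [cond]
        rw [tau_mul, tau_mul, hxt, hyt, ← tau_mul]
      · simp only [cond]
        have h3 : tauG (tauG x1) = tauG x0 := by rw [hxt]; exact tau_cube x0
        rw [tau_mul, tau_mul, tau_mul, hyt, h3]
  · rintro x hx ⟨hxn, m, x0, x1, hxw, hxt⟩
    have hinvn : x⁻¹ [] = [] := by
      apply x.injective
      rw [perm_apply_inv_self, hxn]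
    refine ⟨hinvn, m, (cond m x1 x0)⁻¹, (cond m x0 x1)⁻¹, fun b w => ?_, ?_⟩
    · apply x.injective
      rw [perm_apply_inv_self, hxw]
      cases b <;> cases m <;>
        simp [Bool.xor_false, Bool.xor_true, Subgroup.coe_inv, perm_apply_inv_self]
    · cases m
      · simp only [cond]
        rw [tau_inv, tau_inv, tau_inv, hxt]
      · simp only [cond]
        have h3 : tauG (tauG x1) = tauG x0 := by rw [hxt]; exact tau_cube x0
        rw [tau_inv, tau_inv, tau_inv, h3]

lemma fixes_decomp (g : Grig) (hg : FixesFirst (g : Equiv.Perm (List Bool))) :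
    ((g : Equiv.Perm (List Bool)) [] = []) ∧ ∃ g₀ g₁ : Grig,
      (∀ (b : Bool) (w : List Bool),
        (g : Equiv.Perm (List Bool)) (b :: w)
          = b :: ((cond b g₁ g₀ : Grig) : Equiv.Perm (List Bool)) w) ∧
      tauG g₁ = tauG (tauG g₀) := by
  obtain ⟨hn, m, g0, g1, hw, ht⟩ := dec (g : Equiv.Perm (List Bool)) g.2
  have hm : m = false := by
    obtain ⟨σ', hσ⟩ := hg false []
    have := (hw false []).symm.trans hσ
    have hhead := congrArg (fun l => l.headI) this
    simpa using hhead.symm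
  subst hm
  exact ⟨hn, g0, g1, fun b w => by simpa using hw b w, ht⟩

def Hgrp : Subgroup Grig where
  carrier := {g : Grig | FixesFirst (g : Equiv.Perm (List Bool))}
  one_mem' := fun x σ => ⟨σ, rfl⟩
  mul_mem' := by
    intro g h hg hh x σ
    obtain ⟨s1, h1⟩ := hh x σ
    obtain ⟨s2, h2⟩ := hg x s1
    refine ⟨s2, ?_⟩
    show (g : Equiv.Perm (List Bool)) ((h : Equiv.Perm (List Bool)) (x :: σ)) = x :: s2
    rw [h1, h2]
  inv_mem' := by
    intro g hg
    obtain ⟨hn, g0, g1, hw, _⟩ := fixes_decomp g hg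
    intro x σ
    refine ⟨((cond x g1 g0 : Grig) : Equiv.Perm (List Bool))⁻¹ σ, ?_⟩
    show ((g : Equiv.Perm (List Bool)))⁻¹ (x :: σ) = _
    apply (g : Equiv.Perm (List Bool)).injective
    rw [perm_apply_inv_self, hw]
    congr 1
    exact (perm_apply_inv_self _ _).symm

lemma comp_unique {g : Grig} {g₀ g₁ g₀' g₁' : Grig}
    (h : ∀ (b : Bool) (w : List Bool),
      (g : Equiv.Perm (List Bool)) (b :: w)
        = b :: ((cond b g₁ g₀ : Grig) : Equiv.Perm (List Bool)) w)
    (h' : ∀ (b : Bool) (w : List Bool),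
      (g : Equiv.Perm (List Bool)) (b :: w)
        = b :: ((cond b g₁' g₀' : Grig) : Equiv.Perm (List Bool)) w) :
    g₀ = g₀' ∧ g₁ = g₁' := by
  constructor
  · apply Subtype.ext
    apply Equiv.ext
    intro w
    have := (h false w).symm.trans (h' false w)
    simpa using this
  · apply Subtype.ext
    apply Equiv.ext
    intro w
    have := (h true w).symm.trans (h' true w)
    simpa using this

noncomputable def psi0 (h : Hgrp) : Grig × Grig :=
  ⟨((fixes_decomp h.1 h.2).2).choose, ((fixes_decomp h.1 h.2).2).choose_spec.choose⟩

lemma psi0_spec (h : Hgrp) :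
    (∀ (b : Bool) (w : List Bool),
      ((h : Grig) : Equiv.Perm (List Bool)) (b :: w)
        = b :: ((cond b (psi0 h).2 (psi0 h).1 : Grig) : Equiv.Perm (List Bool)) w)
      ∧ tauG (psi0 h).2 = tauG (tauG (psi0 h).1) :=
  ((fixes_decomp h.1 h.2).2).choose_spec.choose_spec

lemma psi0_nil (h : Hgrp) : ((h : Grig) : Equiv.Perm (List Bool)) [] = [] :=
  (fixes_decomp h.1 h.2).1

lemma psi0_mul (h h' : Hgrp) : psi0 (h * h') = psi0 h * psi0 h' := by
  have hs := (psi0_spec h).1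
  have hs' := (psi0_spec h').1
  have hcomb : ∀ (b : Bool) (w : List Bool),
      ((↑(h * h') : Grig) : Equiv.Perm (List Bool)) (b :: w)
        = b :: ((cond b ((psi0 h).2 * (psi0 h').2) ((psi0 h).1 * (psi0 h').1) : Grig) :
            Equiv.Perm (List Bool)) w := by
    intro b w
    have h1 : ((↑(h * h') : Grig) : Equiv.Perm (List Bool)) (b :: w)
        = ((h : Grig) : Equiv.Perm (List Bool)) (((h' : Grig) : Equiv.Perm (List Bool)) (b :: w)) :=
      rfl
    rw [h1, hs', hs]
    cases b <;> simp [Subgroup.coe_mul, Equiv.Perm.mul_apply]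
  obtain ⟨e0, e1⟩ := comp_unique (psi0_spec (h * h')).1 hcomb
  exact Prod.ext e0 e1

noncomputable def psiH : Hgrp →* Grig × Grig := MonoidHom.mk' psi0 psi0_mul

def spermFun (t g : List Bool → List Bool) : List Bool → List Bool
  | [] => []
  | (false :: w) => false :: t w
  | (true :: w) => true :: g w

def sperm (t g : Equiv.Perm (List Bool)) : Equiv.Perm (List Bool) where
  toFun := spermFun t g
  invFun := spermFun t.symm g.symm
  left_inv := by
    intro l
    rcases l with _ | ⟨x, w⟩
    · rfl
    · cases x <;> simp [spermFun]
  right_inv := by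
    intro l
    rcases l with _ | ⟨x, w⟩
    · rfl
    · cases x <;> simp [spermFun]

lemma sperm_nil (t g : Equiv.Perm (List Bool)) : sperm t g [] = [] := rfl
lemma sperm_false (t g : Equiv.Perm (List Bool)) (w : List Bool) :
    sperm t g (false :: w) = false :: t w := rfl
lemma sperm_true (t g : Equiv.Perm (List Bool)) (w : List Bool) :
    sperm t g (true :: w) = true :: g w := rfl

lemma sperm_mul (t g t' g' : Equiv.Perm (List Bool)) :
    sperm (t * t') (g * g') = sperm t g * sperm t' g' := by
  apply Equiv.ext
  intro l
  rcases l with _ | ⟨x, w⟩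
  · rfl
  · cases x <;> rfl

lemma sperm_inv (t g : Equiv.Perm (List Bool)) :
    (sperm t g)⁻¹ = sperm t⁻¹ g⁻¹ := by
  apply Equiv.ext
  intro l
  apply (sperm t g).injective
  rw [perm_apply_inv_self]
  rcases l with _ | ⟨x, w⟩
  · rfl
  · cases x <;> simp [sperm_false, sperm_true, perm_apply_inv_self]

lemma sigma_mem : ∀ (x : Equiv.Perm (List Bool)) (hx : x ∈ Grig),
    sperm ((tauG ⟨x, hx⟩ : Grig) : Equiv.Perm (List Bool)) x ∈ Grig := by
  intro x hx
  refine Subgroup.closure_induction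
    (p := fun y hy => sperm ((tauG ⟨y, hy⟩ : Grig) : Equiv.Perm (List Bool)) y ∈ Grig)
    ?_ ?_ ?_ ?_ hx
  · intro y hy
    rcases hy with h | h | h | h <;> subst h
    · show sperm ((tauG ga : Grig) : Equiv.Perm (List Bool)) aP ∈ Grig
      have h1 : sperm ((tauG ga : Grig) : Equiv.Perm (List Bool)) aP
          = ((ga * gc * ga : Grig) : Equiv.Perm (List Bool)) := by
        rw [tau_ga]
        apply Equiv.ext
        intro l
        rcases l with _ | ⟨z, w⟩
        · rfl
        · cases z <;> rfl
      rw [h1]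
      exact (ga * gc * ga).2
    · show sperm ((tauG gb : Grig) : Equiv.Perm (List Bool)) bP ∈ Grig
      have h1 : sperm ((tauG gb : Grig) : Equiv.Perm (List Bool)) bP
          = ((gd : Grig) : Equiv.Perm (List Bool)) := by
        rw [tau_gb]
        apply Equiv.ext
        intro l
        rcases l with _ | ⟨z, w⟩
        · rfl
        · cases z <;> rfl
      rw [h1]
      exact gd.2
    · show sperm ((tauG gc : Grig) : Equiv.Perm (List Bool)) cP ∈ Grig
      have h1 : sperm ((tauG gc : Grig) : Equiv.Perm (List Bool)) cP
          = ((gb : Grig) : Equiv.Perm (List Bool)) := by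
        rw [tau_gc]
        apply Equiv.ext
        intro l
        rcases l with _ | ⟨z, w⟩
        · rfl
        · cases z <;> rfl
      rw [h1]
      exact gb.2
    · show sperm ((tauG gd : Grig) : Equiv.Perm (List Bool)) dP ∈ Grig
      have h1 : sperm ((tauG gd : Grig) : Equiv.Perm (List Bool)) dP
          = ((gc : Grig) : Equiv.Perm (List Bool)) := by
        rw [tau_gd]
        apply Equiv.ext
        intro l
        rcases l with _ | ⟨z, w⟩
        · rfl
        · cases z <;> rfl
      rw [h1]
      exact gc.2
  · show sperm ((tauG 1 : Grig) : Equiv.Perm (List Bool)) 1 ∈ Grig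
    have h1 : sperm ((tauG 1 : Grig) : Equiv.Perm (List Bool)) 1
        = (1 : Equiv.Perm (List Bool)) := by
      rw [tau_one]
      apply Equiv.ext
      intro l
      rcases l with _ | ⟨z, w⟩
      · rfl
      · cases z <;> rfl
    rw [h1]
    exact Grig.one_mem
  · intro y z hy hz py pz
    show sperm ((tauG (⟨y, hy⟩ * ⟨z, hz⟩) : Grig) : Equiv.Perm (List Bool)) (y * z) ∈ Grig
    rw [tau_mul, Subgroup.coe_mul]
    have h1 : (y * z : Equiv.Perm (List Bool))
        = ((⟨y, hy⟩ : Grig) : Equiv.Perm (List Bool)) * ((⟨z, hz⟩ : Grig) : Equiv.Perm (List Bool)) :=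
      rfl
    rw [h1, sperm_mul]
    exact mul_mem py pz
  · intro y hy py
    show sperm ((tauG (⟨y, hy⟩)⁻¹ : Grig) : Equiv.Perm (List Bool)) y⁻¹ ∈ Grig
    rw [tau_inv, Subgroup.coe_inv]
    have h1 : (y⁻¹ : Equiv.Perm (List Bool))
        = (((⟨y, hy⟩ : Grig) : Equiv.Perm (List Bool)))⁻¹ := rfl
    rw [h1, ← sperm_inv]
    exact inv_mem py

noncomputable def sigma0 (g : Grig) : Grig :=
  ⟨sperm ((tauG g : Grig) : Equiv.Perm (List Bool)) (g : Equiv.Perm (List Bool)),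
    sigma_mem g.1 g.2⟩

lemma sigma_mul (g h : Grig) : sigma0 (g * h) = sigma0 g * sigma0 h := by
  apply Subtype.ext
  show sperm _ _ = _
  rw [tau_mul]
  show sperm ((tauG g * tauG h : Grig) : Equiv.Perm (List Bool)) _ = _
  rw [Subgroup.coe_mul, Subgroup.coe_mul, sperm_mul]
  rfl

noncomputable def sigmaHom : Grig →* Grig := MonoidHom.mk' sigma0 sigma_mul
noncomputable def tauHom : Grig →* Grig := MonoidHom.mk' tauG tau_mul

lemma sigma_ga : sigma0 ga = ga * gc * ga := by
  apply Subtype.ext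
  show sperm _ _ = _
  rw [tau_ga]
  apply Equiv.ext
  intro l
  rcases l with _ | ⟨z, w⟩
  · rfl
  · cases z <;> rfl

lemma sigma_gb : sigma0 gb = gd := by
  apply Subtype.ext
  show sperm _ _ = _
  rw [tau_gb]
  apply Equiv.ext
  intro l
  rcases l with _ | ⟨z, w⟩
  · rfl
  · cases z <;> rfl

lemma sigma_gc : sigma0 gc = gb := by
  apply Subtype.ext
  show sperm _ _ = _
  rw [tau_gc]
  apply Equiv.ext
  intro l
  rcases l with _ | ⟨z, w⟩
  · rfl
  · cases z <;> rfl

lemma sigma_gd : sigma0 gd = gc := by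
  apply Subtype.ext
  show sperm _ _ = _
  rw [tau_gd]
  apply Equiv.ext
  intro l
  rcases l with _ | ⟨z, w⟩
  · rfl
  · cases z <;> rfl

lemma psiH_prop : PsiProp Hgrp psiH := by
  intro h σ
  exact ⟨(psi0_spec h).1 false σ, (psi0_spec h).1 true σ⟩

/-- For every element `h` of the first-level stabilizer `H` of the Grigorchuk group,
writing `ψ(h) = (h₀, h₁)`, one has `h = a·σ(h₀)·a·σ(τ(h₀)⁻¹·h₁)`, where `σ` and `τ` are
the homomorphisms with `σ(a)=aca, σ(b)=d, σ(c)=b, σ(d)=c` and `τ(a)=d, τ(b)=1, τ(c)=a,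
τ(d)=a`. -/
theorem grigorchuk_reconstruction_identity :
    ∃ H : Subgroup Grig,
      (∀ g : Grig, g ∈ H ↔ FixesFirst (g : Equiv.Perm (List Bool))) ∧
      ∃ ψ : H →* Grig × Grig, PsiProp H ψ ∧
      ∃ σ τ : Grig →* Grig,
        σ ga = ga * gc * ga ∧ σ gb = gd ∧ σ gc = gb ∧ σ gd = gc ∧
        τ ga = gd ∧ τ gb = 1 ∧ τ gc = ga ∧ τ gd = ga ∧
        ∀ h : H, (h : Grig) =
          ga * σ (ψ h).1 * ga * σ ((τ (ψ h).1)⁻¹ * (ψ h).2) := by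
  refine ⟨Hgrp, fun g => Iff.rfl, psiH, psiH_prop, sigmaHom, tauHom,
    sigma_ga, sigma_gb, sigma_gc, sigma_gd, tau_ga, tau_gb, tau_gc, tau_gd, ?_⟩
  intro h
  show (h : Grig) = ga * sigma0 (psi0 h).1 * ga * sigma0 ((tauG (psi0 h).1)⁻¹ * (psi0 h).2)
  obtain ⟨hspec, htau⟩ := psi0_spec h
  set p := psi0 h with hp
  have hX : tauG ((tauG p.1)⁻¹ * p.2) = 1 := by
    rw [tau_mul, tau_inv, htau, inv_mul_cancel]
  have hunfold : ∀ l' : List Bool,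
      ((ga * sigma0 p.1 * ga * sigma0 ((tauG p.1)⁻¹ * p.2) : Grig) : Equiv.Perm (List Bool)) l'
        = aP (((sigma0 p.1 : Grig) : Equiv.Perm (List Bool))
            (aP (((sigma0 ((tauG p.1)⁻¹ * p.2) : Grig) : Equiv.Perm (List Bool)) l'))) :=
    fun l' => rfl
  apply Subtype.ext
  apply Equiv.ext
  intro l
  rcases l with _ | ⟨x, w⟩
  · rw [psi0_nil h, hunfold]
    rfl
  · cases x
    · have e1 : ((sigma0 ((tauG p.1)⁻¹ * p.2) : Grig) : Equiv.Perm (List Bool)) (false :: w)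
          = false :: w := by
        show sperm _ _ _ = _
        rw [sperm_false, hX, OneMemClass.coe_one, Equiv.Perm.one_apply]
      have e2 : ((h : Grig) : Equiv.Perm (List Bool)) (false :: w)
          = false :: ((p.1 : Grig) : Equiv.Perm (List Bool)) w := hspec false w
      rw [e2, hunfold, e1]
      rfl
    · have e1 : ((sigma0 ((tauG p.1)⁻¹ * p.2) : Grig) : Equiv.Perm (List Bool)) (true :: w)
          = true :: ((((tauG p.1)⁻¹ * p.2 : Grig)) : Equiv.Perm (List Bool)) w := rfl
      have e2 : ((h : Grig) : Equiv.Perm (List Bool)) (true :: w)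
          = true :: ((p.2 : Grig) : Equiv.Perm (List Bool)) w := hspec true w
      have e3 : ((tauG p.1 : Grig) : Equiv.Perm (List Bool))
            (((((tauG p.1)⁻¹ * p.2 : Grig)) : Equiv.Perm (List Bool)) w)
          = ((p.2 : Grig) : Equiv.Perm (List Bool)) w := by
        rw [← Equiv.Perm.mul_apply, ← Subgroup.coe_mul, mul_inv_cancel_left]
      rw [e2, hunfold, e1]
      show true :: ((p.2 : Grig) : Equiv.Perm (List Bool)) w
        = true :: ((tauG p.1 : Grig) : Equiv.Perm (List Bool))
            (((((tauG p.1)⁻¹ * p.2 : Grig)) : Equiv.Perm (List Bool)) w)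
      rw [e3]
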